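/- Let E be a finite set with distinguished element 0, and Z : E⁴ → ℝ. Define NCycle_7 as the cyclic sum of Z over length-4 cyclic factors of a word of length 7. If NCycle_7(a,b,c,d,0,0,0) = 0 for all a,b,c,d ∈ E, then there exists a function W : E³ → ℝ such that Z(a,b,c,d) = W(b,c,d) − W(a,b,c) for all a,b,c,d ∈ E. In fact one may take W(a,b,c) = Z(0,0,0,a) + Z(0,0,a,b) + Z(0,a,b,c). -/

import Mathlib

/-- Cyclic sum of `Z` over length-4 cyclic factors of a word of length `n`. -/
def ncyc {E : Type*} (Z : E → E → E → E → ℝ) (n : ℕ) (x : ℕ → E) : ℝ :=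
  ∑ j ∈ Finset.range n,
    Z (x (j % n)) (x ((j+1) % n)) (x ((j+2) % n)) (x ((j+3) % n))

/-- View a finite tuple as a periodic word indexed by `ℕ`. -/
def ofT {E : Type*} {n : ℕ} [NeZero n] (v : Fin n → E) : ℕ → E :=
  fun j => v (Fin.ofNat n j)

lemma ncyc7 {E : Type*} (Z : E → E → E → E → ℝ) (a b c d e f g : E) :
    ncyc Z 7 (ofT ![a,b,c,d,e,f,g]) =
      Z a b c d + Z b c d e + Z c d e f + Z d e f g + Z e f g a + Z f g a b + Z g a b c := by
  simp [ncyc, ofT, Finset.sum_range_succ, Matrix.cons_val_succ]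
  rfl

/-- If `NCycle_7(a,b,c,d,0,0,0) = 0` for all `a,b,c,d`, then `Z` is a gradient:
`Z(a,b,c,d) = W(b,c,d) - W(a,b,c)`, and one may take
`W(a,b,c) = Z(0,0,0,a) + Z(0,0,a,b) + Z(0,a,b,c)`. -/
theorem stmt6 {E : Type*} [Fintype E] (e : E) (Z : E → E → E → E → ℝ)
    (h : ∀ a b c d : E, ncyc Z 7 (ofT ![a,b,c,d,e,e,e]) = 0) :
    ∃ W : E → E → E → ℝ,
      (∀ a b c : E, W a b c = Z e e e a + Z e e a b + Z e a b c) ∧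
      (∀ a b c d : E, Z a b c d = W b c d - W a b c) := by
  refine ⟨fun a b c => Z e e e a + Z e e a b + Z e a b c, fun _ _ _ => rfl, ?_⟩
  intro a b c d
  have h1 := h a b c d
  have h2 := h b c d e
  have h3 := h e e e e
  rw [ncyc7] at h1 h2 h3
  dsimp only
  linarith
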